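/- For ψ ∈ {1, −1} (call and put respectively), ∫_ℝ e^{−rT}·max(ψ·(S_T(z) − K), 0)·φ(z) dz = ψ·S₀·e^{−qT}·Φ(ψd₁) − ψ·K·e^{−rT}·Φ(ψd₂). -/

import Mathlib

open MeasureTheory

/-- The standard normal density. -/
noncomputable def gaussPDF (z : ℝ) : ℝ := (Real.sqrt (2 * Real.pi))⁻¹ * Real.exp (-z ^ 2 / 2)

/-- The standard normal cumulative distribution function. -/
noncomputable def gaussCDF (x : ℝ) : ℝ := ∫ z in Set.Iic x, gaussPDF z

lemma integrable_gaussPDF : Integrable gaussPDF := by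
  have h : Integrable (fun z : ℝ => Real.exp (-(1/2:ℝ) * z ^ 2)) :=
    integrable_exp_neg_mul_sq (by norm_num)
  have h2 := h.const_mul ((Real.sqrt (2 * Real.pi))⁻¹)
  have hfun : gaussPDF = fun z => (Real.sqrt (2 * Real.pi))⁻¹ * Real.exp (-(1/2:ℝ) * z ^ 2) := by
    funext z; unfold gaussPDF; congr 1; exact congrArg Real.exp (by ring)
  rw [hfun]; exact h2

lemma gauss_shift (c z : ℝ) :
    Real.exp (c * z) * gaussPDF z = Real.exp (c ^ 2 / 2) * gaussPDF (z - c) := by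
  unfold gaussPDF
  rw [mul_left_comm (Real.exp (c * z)), ← Real.exp_add,
    mul_left_comm (Real.exp (c ^ 2 / 2)), ← Real.exp_add]
  congr 1
  exact congrArg Real.exp (by ring)

lemma integrable_tilt (c : ℝ) : Integrable (fun z => Real.exp (c * z) * gaussPDF z) := by
  have := (integrable_gaussPDF.comp_sub_right c).const_mul (Real.exp (c ^ 2 / 2))
  exact this.congr (by filter_upwards with z; exact (gauss_shift c z).symm)

lemma shift_Ici (f : ℝ → ℝ) (a c : ℝ) :
    ∫ z in Set.Ici a, f (z - c) = ∫ z in Set.Ici (a - c), f z := by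
  have A : MeasurableEmbedding fun x : ℝ => x - c :=
    (Homeomorph.subRight c).measurableEmbedding
  have hm : Measure.map (fun x : ℝ => x - c) volume = volume := by
    simp_rw [sub_eq_add_neg]; exact map_add_right_eq_self volume (-c)
  have h := A.setIntegral_map (μ := volume) f (Set.Ici (a - c))
  have hpre : (fun x : ℝ => x - c) ⁻¹' Set.Ici (a - c) = Set.Ici a := by
    ext x; simp [sub_le_sub_iff_right]
  rw [hm, hpre] at h
  exact h.symm

lemma shift_Iic (f : ℝ → ℝ) (a c : ℝ) :
    ∫ z in Set.Iic a, f (z - c) = ∫ z in Set.Iic (a - c), f z := by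
  have A : MeasurableEmbedding fun x : ℝ => x - c :=
    (Homeomorph.subRight c).measurableEmbedding
  have hm : Measure.map (fun x : ℝ => x - c) volume = volume := by
    simp_rw [sub_eq_add_neg]; exact map_add_right_eq_self volume (-c)
  have h := A.setIntegral_map (μ := volume) f (Set.Iic (a - c))
  have hpre : (fun x : ℝ => x - c) ⁻¹' Set.Iic (a - c) = Set.Iic a := by
    ext x; simp [sub_le_sub_iff_right]
  rw [hm, hpre] at h
  exact h.symm

lemma gaussPDF_neg (z : ℝ) : gaussPDF (-z) = gaussPDF z := by unfold gaussPDF; ring_nf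

lemma integral_Ici_gaussPDF (a : ℝ) : ∫ z in Set.Ici a, gaussPDF z = gaussCDF (-a) := by
  rw [gaussCDF]
  have h := integral_comp_neg_Iic (-a) gaussPDF
  rw [neg_neg] at h
  rw [integral_Ici_eq_integral_Ioi, ← h]
  exact setIntegral_congr_fun measurableSet_Iic fun x _ => gaussPDF_neg x

lemma tilt_Ici (a c : ℝ) :
    ∫ z in Set.Ici a, Real.exp (c * z) * gaussPDF z
      = Real.exp (c ^ 2 / 2) * gaussCDF (c - a) := by
  calc ∫ z in Set.Ici a, Real.exp (c * z) * gaussPDF z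
      = ∫ z in Set.Ici a, Real.exp (c ^ 2 / 2) * gaussPDF (z - c) :=
        setIntegral_congr_fun measurableSet_Ici fun z _ => gauss_shift c z
    _ = Real.exp (c ^ 2 / 2) * ∫ z in Set.Ici a, gaussPDF (z - c) := integral_const_mul _ _
    _ = Real.exp (c ^ 2 / 2) * gaussCDF (c - a) := by
        rw [shift_Ici, integral_Ici_gaussPDF, neg_sub]

lemma tilt_Iic (a c : ℝ) :
    ∫ z in Set.Iic a, Real.exp (c * z) * gaussPDF z
      = Real.exp (c ^ 2 / 2) * gaussCDF (a - c) := by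
  calc ∫ z in Set.Iic a, Real.exp (c * z) * gaussPDF z
      = ∫ z in Set.Iic a, Real.exp (c ^ 2 / 2) * gaussPDF (z - c) :=
        setIntegral_congr_fun measurableSet_Iic fun z _ => gauss_shift c z
    _ = Real.exp (c ^ 2 / 2) * ∫ z in Set.Iic a, gaussPDF (z - c) := integral_const_mul _ _
    _ = Real.exp (c ^ 2 / 2) * gaussCDF (a - c) := by
        rw [shift_Iic, gaussCDF]

/-- The Black–Scholes formula for the conditional price of a European option
(`ψ = 1` call, `ψ = -1` put) with rate `r`, dividend yield `q` and volatility `σ`. -/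
theorem stmt_8 (S₀ K T σ : ℝ) (r q : ℝ) (hS : 0 < S₀) (hK : 0 < K) (hT : 0 < T)
    (hσ : 0 < σ) (ψ : ℝ) (hψ : ψ = 1 ∨ ψ = -1) :
    (∫ z : ℝ, Real.exp (-r * T)
        * max (ψ * (S₀ * Real.exp ((r - q - σ ^ 2 / 2) * T + σ * Real.sqrt T * z) - K)) 0
        * gaussPDF z)
      = ψ * S₀ * Real.exp (-q * T)
          * gaussCDF (ψ * ((Real.log (S₀ / K) + (r - q + σ ^ 2 / 2) * T) / (σ * Real.sqrt T)))
        - ψ * K * Real.exp (-r * T)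
          * gaussCDF (ψ * ((Real.log (S₀ / K) + (r - q + σ ^ 2 / 2) * T) / (σ * Real.sqrt T)
              - σ * Real.sqrt T)) := by
  have hsT : 0 < Real.sqrt T := Real.sqrt_pos.mpr hT
  set s : ℝ := σ * Real.sqrt T with hs_def
  have hs : 0 < s := mul_pos hσ hsT
  have hs2 : s ^ 2 = σ ^ 2 * T := by rw [hs_def, mul_pow, Real.sq_sqrt hT.le]
  set m : ℝ := (r - q - σ ^ 2 / 2) * T with hm_def
  set L : ℝ := Real.log (S₀ / K) with hL_def
  set d2 : ℝ := (L + m) / s with hd2_def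
  have hkey : (r - q + σ ^ 2 / 2) * T = m + s ^ 2 := by rw [hm_def, hs2]; ring
  have hd1 : (L + (r - q + σ ^ 2 / 2) * T) / s = d2 + s := by
    rw [hkey, hd2_def]; field_simp; ring
  have hcrit : S₀ * Real.exp (m + s * (-d2)) = K := by
    have harg : m + s * (-d2) = -L := by rw [hd2_def]; field_simp; ring
    rw [harg, hL_def, Real.exp_neg, Real.exp_log (div_pos hS hK)]
    field_simp
  have hmono : ∀ z : ℝ, (K ≤ S₀ * Real.exp (m + s * z) ↔ -d2 ≤ z) := by
    intro z
    rw [← hcrit, mul_le_mul_iff_right₀ hS, Real.exp_le_exp, add_le_add_iff_left,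
      mul_le_mul_iff_right₀ hs]
  have hmono' : ∀ z : ℝ, (S₀ * Real.exp (m + s * z) ≤ K ↔ z ≤ -d2) := by
    intro z
    rw [← hcrit, mul_le_mul_iff_right₀ hS, Real.exp_le_exp, add_le_add_iff_left,
      mul_le_mul_iff_right₀ hs]
  have hexp : Real.exp (-r * T) * (Real.exp m * Real.exp (s ^ 2 / 2))
      = Real.exp (-q * T) := by
    rw [← Real.exp_add, ← Real.exp_add]
    congr 1
    rw [hm_def, hs2]; ring
  have hI1 : ∀ u : Set ℝ, IntegrableOn
      (fun z => S₀ * Real.exp m * (Real.exp (s * z) * gaussPDF z)) u :=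
    fun u => ((integrable_tilt s).const_mul _).integrableOn
  have hI2 : ∀ u : Set ℝ, IntegrableOn (fun z => K * gaussPDF z) u :=
    fun u => (integrable_gaussPDF.const_mul K).integrableOn
  rcases hψ with h1 | h1 <;> subst h1
  · -- call
    have hind : (fun z : ℝ => Real.exp (-r * T)
          * max (1 * (S₀ * Real.exp (m + s * z) - K)) 0 * gaussPDF z)
        = Set.indicator (Set.Ici (-d2)) (fun z => Real.exp (-r * T)
            * (S₀ * Real.exp m * (Real.exp (s * z) * gaussPDF z) - K * gaussPDF z)) := by
      funext z
      by_cases hz : -d2 ≤ z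
      · rw [Set.indicator_of_mem (show z ∈ Set.Ici (-d2) from hz)]
        have hge : K ≤ S₀ * Real.exp (m + s * z) := (hmono z).mpr hz
        rw [one_mul, max_eq_left (by linarith), Real.exp_add]
        ring
      · rw [Set.indicator_of_notMem (show z ∉ Set.Ici (-d2) from hz)]
        have hle : S₀ * Real.exp (m + s * z) ≤ K := (hmono' z).mpr (le_of_not_ge hz)
        rw [one_mul, max_eq_right (by linarith), mul_zero, zero_mul]
    rw [hind, integral_indicator measurableSet_Ici, integral_const_mul,
      integral_sub (hI1 _) (hI2 _), integral_const_mul, integral_const_mul,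
      tilt_Ici, integral_Ici_gaussPDF, neg_neg, sub_neg_eq_add, add_comm s d2]
    simp only [one_mul]
    rw [hd1, add_sub_cancel_right]
    linear_combination S₀ * gaussCDF (d2 + s) * hexp
  · -- put
    have hind : (fun z : ℝ => Real.exp (-r * T)
          * max (-1 * (S₀ * Real.exp (m + s * z) - K)) 0 * gaussPDF z)
        = Set.indicator (Set.Iic (-d2)) (fun z => Real.exp (-r * T)
            * (K * gaussPDF z - S₀ * Real.exp m * (Real.exp (s * z) * gaussPDF z))) := by
      funext z
      by_cases hz : z ≤ -d2
      · rw [Set.indicator_of_mem (show z ∈ Set.Iic (-d2) from hz)]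
        have hle : S₀ * Real.exp (m + s * z) ≤ K := (hmono' z).mpr hz
        rw [max_eq_left (by linarith), Real.exp_add]
        ring
      · rw [Set.indicator_of_notMem (show z ∉ Set.Iic (-d2) from hz)]
        have hge : K ≤ S₀ * Real.exp (m + s * z) := (hmono z).mpr (le_of_not_ge hz)
        rw [max_eq_right (by linarith), mul_zero, zero_mul]
    rw [hind, integral_indicator measurableSet_Iic, integral_const_mul,
      integral_sub (hI2 _) (hI1 _), integral_const_mul, integral_const_mul,
      tilt_Iic, hd1, add_sub_cancel_right]
    have hgc : ∀ x : ℝ, (∫ a in Set.Iic x, gaussPDF a) = gaussCDF x := fun _ => rfl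
    simp only [hgc]
    have harg : gaussCDF (-d2 - s) = gaussCDF (-1 * (d2 + s)) := congrArg gaussCDF (by ring)
    have harg2 : gaussCDF (-d2) = gaussCDF (-1 * d2) := congrArg gaussCDF (by ring)
    rw [harg, harg2]
    linear_combination (-(S₀ * gaussCDF (-1 * (d2 + s)))) * hexp
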